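/- Let q ≥ 2 and n ≥ 1 be integers and f, g : ℤ_q^n → ℤ_{2q}. Then for every z ∈ ℤ_q^n, C_{f,g}(z) = ω^{Σ_i ẑ_i} Σ_{u ∈ ℤ_q^n} N_f(u) · conj(N_g(u)) · ξ^{⟨û,ẑ⟩}. -/

import Mathlib

open Finset

/-- `ω = e^{πi/q}`, a primitive `2q`-th root of unity. -/
noncomputable def omg (q : ℕ) : ℂ := Complex.exp ((Real.pi : ℂ) * Complex.I / q)

/-- `ξ = e^{2πi/q}`, a primitive `q`-th root of unity. -/
noncomputable def xiq (q : ℕ) : ℂ := Complex.exp (2 * (Real.pi : ℂ) * Complex.I / q)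

/-- The `2q`-nega-Hadamard transform of `f : ℤ_q^n → ℤ_{2q}` at `u ∈ ℤ_q^n`:
`N_f(u) = q^{-n/2} Σ_x ω^{f(x)} ξ^{⟨x̂,û⟩} ω^{Σ_i x̂_i}`. -/
noncomputable def NHT (q n : ℕ) [NeZero q] (f : (Fin n → ZMod q) → ZMod (2 * q))
    (u : Fin n → ZMod q) : ℂ :=
  (Real.sqrt ((q : ℝ) ^ n) : ℂ)⁻¹ *
    ∑ x : Fin n → ZMod q,
      omg q ^ (f x).val * xiq q ^ (∑ i, (x i).val * (u i).val) * omg q ^ (∑ i, (x i).val)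

/-- The `2q`-nega-crosscorrelation of `f, g : ℤ_q^m → ℤ_{2q}` at `u`:
`C_{f,g}(u) = Σ_x ω^{f(x) − g(x+u)} (−1)^{n_q(x̂,û)}`. -/
noncomputable def negaCC (q m : ℕ) [NeZero q]
    (f g : (Fin m → ZMod q) → ZMod (2 * q)) (u : Fin m → ZMod q) : ℂ :=
  ∑ x : Fin m → ZMod q,
    omg q ^ (f x - g (x + u)).val *
      (-1 : ℂ) ^ (Finset.univ.filter (fun i => q ≤ (x i).val + (u i).val)).card

section aux
variable (q : ℕ) [NeZero q]

lemma omg_ne_zero : omg q ≠ 0 := Complex.exp_ne_zero _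

lemma qC_ne_zero : (q : ℂ) ≠ 0 := Nat.cast_ne_zero.mpr (NeZero.ne q)

lemma omg_pow_q : omg q ^ q = -1 := by
  have hq : (q:ℂ) ≠ 0 := qC_ne_zero q
  rw [omg, ← Complex.exp_nat_mul,
    show (q:ℂ) * ((Real.pi : ℂ) * Complex.I / q) = (Real.pi:ℂ) * Complex.I by
      field_simp]
  exact Complex.exp_pi_mul_I

lemma omg_pow_two_q : omg q ^ (2*q) = 1 := by
  rw [mul_comm, pow_mul, omg_pow_q, neg_one_sq]

lemma xiq_eq : xiq q = omg q ^ 2 := by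
  rw [omg, xiq, ← Complex.exp_nat_mul]
  congr 1
  push_cast
  ring

lemma conj_omg : (starRingEnd ℂ) (omg q) = (omg q)⁻¹ := by
  rw [omg, ← Complex.exp_conj, ← Complex.exp_neg]
  congr 1
  simp [map_div₀, Complex.conj_I]
  ring

lemma omg_zpow_congr (k j : ℤ) (h : (2*(q:ℤ)) ∣ (k - j)) : omg q ^ k = omg q ^ j := by
  obtain ⟨t, ht⟩ := h
  have hk : k = j + (2*(q:ℤ)) * t := by linarith
  rw [hk, zpow_add₀ (omg_ne_zero q), zpow_mul, show ((2:ℤ)*(q:ℤ)) = ((2*q : ℕ) : ℤ) by push_cast; ring,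
    zpow_natCast, omg_pow_two_q, one_zpow, mul_one]

lemma xiq_pow_q : xiq q ^ q = 1 := by
  have hq : (q:ℂ) ≠ 0 := qC_ne_zero q
  rw [xiq, ← Complex.exp_nat_mul,
    show (q:ℂ) * (2 * (Real.pi : ℂ) * Complex.I / q) = 2 * (Real.pi:ℂ) * Complex.I by
      field_simp]
  exact Complex.exp_two_pi_mul_I

lemma xiq_zpow_eq_one_iff (c : ℤ) : xiq q ^ c = 1 ↔ (q:ℤ) ∣ c := by
  rw [xiq, ← Complex.exp_int_mul, Complex.exp_eq_one_iff]
  have hq : (q:ℂ) ≠ 0 := qC_ne_zero q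
  have hπ : (Real.pi:ℂ) ≠ 0 := Complex.ofReal_ne_zero.mpr Real.pi_ne_zero
  have hI : Complex.I ≠ 0 := Complex.I_ne_zero
  have h2 : (2:ℂ) * (Real.pi:ℂ) * Complex.I ≠ 0 :=
    mul_ne_zero (mul_ne_zero two_ne_zero hπ) hI
  constructor
  · rintro ⟨k, hk⟩
    refine ⟨k, ?_⟩
    have hc : (c:ℂ) = q * k := by
      apply mul_right_cancel₀ h2
      field_simp at hk
      linear_combination (2 * (Real.pi:ℂ) * Complex.I) * hk
    exact_mod_cast hc
  · rintro ⟨k, rfl⟩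
    refine ⟨k, ?_⟩
    push_cast
    field_simp
end aux


section aux2
variable (q : ℕ) [NeZero q]

lemma sum_val_pow (r : ℂ) : ∑ v : ZMod q, r ^ v.val = ∑ k ∈ Finset.range q, r ^ k := by
  rw [← Fin.sum_univ_eq_sum_range]
  refine Finset.sum_nbij' (i := fun (v : ZMod q) => (⟨v.val, ZMod.val_lt v⟩ : Fin q))
    (j := fun (k : Fin q) => ((k : ℕ) : ZMod q)) (fun a _ => Finset.mem_univ _)
    (fun a _ => Finset.mem_univ _) ?_ ?_ ?_
  · intro v _
    simp [ZMod.natCast_val, ZMod.cast_id]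
  · intro k _
    ext
    simp [ZMod.val_cast_of_lt k.isLt]
  · intro v _
    rfl

lemma zpow_sum₀ {ι : Type*} {a : ℂ} (ha : a ≠ 0) (s : Finset ι) (m : ι → ℤ) :
    a ^ (∑ i ∈ s, m i) = ∏ i ∈ s, a ^ m i := by
  classical
  induction s using Finset.induction_on with
  | empty => simp
  | insert _ _ h ih => rw [Finset.sum_insert h, Finset.prod_insert h, zpow_add₀ ha, ih]

lemma prod_ite_all {n : ℕ} (P : Fin n → Prop) [DecidablePred P] (c : ℂ) :
    (∏ i, if P i then c else 0) = if ∀ i, P i then c ^ n else 0 := by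
  by_cases h : ∀ i, P i
  · rw [if_pos h]
    rw [Finset.prod_congr rfl (fun i _ => if_pos (h i)), Finset.prod_const,
      Finset.card_univ, Fintype.card_fin]
  · obtain ⟨i, hi⟩ := not_forall.mp h
    rw [if_neg h]
    exact Finset.prod_eq_zero (Finset.mem_univ i) (by simp [hi])
end aux2

section aux3
variable (q : ℕ) [NeZero q]

lemma sum_char (c : ℤ) :
    ∑ v : ZMod q, (xiq q ^ c) ^ v.val = if (q:ℤ) ∣ c then (q:ℂ) else 0 := by
  rw [sum_val_pow]
  by_cases h : (q:ℤ) ∣ c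
  · rw [if_pos h, (xiq_zpow_eq_one_iff q c).mpr h]
    simp
  · rw [if_neg h,
      geom_sum_eq (fun hh => h ((xiq_zpow_eq_one_iff q c).mp hh)) q]
    have h1 : (xiq q ^ c) ^ q = 1 := by
      rw [← zpow_natCast (xiq q ^ c) q, ← zpow_mul, mul_comm, zpow_mul, zpow_natCast,
        xiq_pow_q, one_zpow]
    rw [h1, sub_self, zero_div]

lemma dvd_iff_eq (x y w : ZMod q) :
    ((q:ℤ) ∣ ((x.val:ℤ) - (y.val:ℤ) + (w.val:ℤ))) ↔ y = x + w := by
  rw [← ZMod.intCast_zmod_eq_zero_iff_dvd]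
  push_cast [ZMod.natCast_val, ZMod.cast_id]
  constructor
  · intro h
    linear_combination -h
  · intro h
    rw [h]
    ring

lemma carry_diff (a b : ZMod q) :
    ((a.val : ℤ) + (b.val:ℤ)) - (((a+b).val : ℕ) : ℤ)
      = if q ≤ a.val + b.val then (q:ℤ) else 0 := by
  have h := ZMod.val_add a b
  have ha := ZMod.val_lt a
  have hb := ZMod.val_lt b
  by_cases hle : q ≤ a.val + b.val
  · rw [if_pos hle]
    have h2 : (a.val + b.val) % q = a.val + b.val - q := by
      rw [Nat.mod_eq_sub_mod hle, Nat.mod_eq_of_lt (by omega)]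
    rw [h, h2]
    omega
  · rw [if_neg hle, h, Nat.mod_eq_of_lt (by omega)]
    omega

lemma carry_sum {n : ℕ} (x z : Fin n → ZMod q) :
    ((∑ i, (((x i).val:ℕ):ℤ)) + ∑ i, (((z i).val:ℕ):ℤ)) - ∑ i, ((((x i) + (z i)).val : ℕ) : ℤ)
      = (q:ℤ) * ((Finset.univ.filter (fun i => q ≤ (x i).val + (z i).val)).card : ℤ) := by
  classical
  rw [← Finset.sum_add_distrib, ← Finset.sum_sub_distrib,
    Finset.sum_congr rfl (fun i _ => carry_diff q (x i) (z i)),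
    Finset.sum_ite, Finset.sum_const, Finset.sum_const_zero, add_zero, nsmul_eq_mul]
  ring
end aux3

/-- For all `z ∈ ℤ_q^n`,
`C_{f,g}(z) = ω^{Σ_i ẑ_i} Σ_u N_f(u) · conj(N_g(u)) · ξ^{⟨û,ẑ⟩}`. -/
theorem negaCC_eq_sum (q n : ℕ) [NeZero q] (hq : 2 ≤ q) (hn : 1 ≤ n)
    (f g : (Fin n → ZMod q) → ZMod (2 * q)) (z : Fin n → ZMod q) :
    negaCC q n f g z
      = omg q ^ (∑ i, (z i).val) *
          ∑ u : Fin n → ZMod q,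
            NHT q n f u * (starRingEnd ℂ) (NHT q n g u) *
              xiq q ^ (∑ i, (u i).val * (z i).val) := by
  classical
  haveI h2q : NeZero (2*q) := ⟨by have := NeZero.ne q; omega⟩
  have hW : omg q ≠ 0 := omg_ne_zero q
  -- LHS reduction
  have hL : negaCC q n f g z
      = ∑ x : Fin n → ZMod q,
          omg q ^ ((((f x).val : ℤ)) - (((g (x+z)).val : ℤ))) *
            (-1:ℂ) ^ (Finset.univ.filter (fun i => q ≤ (x i).val + (z i).val)).card := by
    rw [negaCC]
    refine Finset.sum_congr rfl fun x _ => ?_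
    congr 1
    rw [← zpow_natCast]
    apply omg_zpow_congr
    have h0 : (((((f x - g (x+z)).val : ℕ) : ℤ)
        - ((((f x).val:ℕ):ℤ) - (((g (x+z)).val:ℕ):ℤ)) : ℤ) : ZMod (2*q)) = 0 := by
      push_cast [ZMod.natCast_val, ZMod.cast_id]
      ring
    have hdvd := (ZMod.intCast_zmod_eq_zero_iff_dvd _ (2*q)).mp h0
    exact_mod_cast hdvd
  -- NHT expansion
  have hNHT : ∀ (h : (Fin n → ZMod q) → ZMod (2*q)) (u : Fin n → ZMod q),
      NHT q n h u = ((Real.sqrt ((q : ℝ) ^ n) : ℝ) : ℂ)⁻¹ *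
        ∑ x : Fin n → ZMod q,
          omg q ^ ((h x).val + 2 * (∑ i, (x i).val * (u i).val) + ∑ i, (x i).val) := by
    intro h u
    rw [NHT]
    congr 1
    refine Finset.sum_congr rfl fun x _ => ?_
    rw [pow_add, pow_add, pow_mul, ← xiq_eq]
  have hconj : ∀ u : Fin n → ZMod q,
      (starRingEnd ℂ) (NHT q n g u) = ((Real.sqrt ((q : ℝ) ^ n) : ℝ) : ℂ)⁻¹ *
        ∑ y : Fin n → ZMod q,
          omg q ^ (-(((g y).val + 2 * (∑ i, (y i).val * (u i).val) + ∑ i, (y i).val : ℕ) : ℤ)) := by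
    intro u
    rw [hNHT g u, map_mul, map_inv₀, Complex.conj_ofReal, map_sum]
    congr 1
    refine Finset.sum_congr rfl fun y _ => ?_
    rw [map_pow, conj_omg, inv_pow, ← zpow_natCast, ← zpow_neg]
  have hs2 : (((Real.sqrt ((q : ℝ) ^ n) : ℝ) : ℂ)⁻¹) ^ 2 * (q:ℂ)^n = 1 := by
    have hq0 : (0:ℝ) < (q:ℝ) := by exact_mod_cast Nat.pos_of_ne_zero (NeZero.ne q)
    have h1 : ((Real.sqrt ((q:ℝ)^n) : ℝ):ℂ)^2 = (q:ℂ)^n := by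
      rw [← Complex.ofReal_pow, Real.sq_sqrt (by positivity)]
      push_cast
      ring
    rw [inv_pow, h1, inv_mul_cancel₀ (pow_ne_zero _ (qC_ne_zero q))]
  obtain ⟨s, hs⟩ : ∃ s : ℂ, s = ((Real.sqrt ((q : ℝ) ^ n) : ℝ) : ℂ)⁻¹ := ⟨_, rfl⟩
  rw [← hs] at hNHT hconj hs2
  -- sum expansion helper
  have hsum : ∀ x y u : Fin n → ZMod q,
      (∑ i, 2*((((x i).val:ℤ)) - (((y i).val:ℤ)) + (((z i).val:ℤ)))*(((u i).val:ℤ)))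
      = 2*(∑ i, (((x i).val:ℤ)) * (((u i).val:ℤ)))
        - 2*(∑ i, (((y i).val:ℤ)) * (((u i).val:ℤ)))
        + 2*(∑ i, (((u i).val:ℤ)) * (((z i).val:ℤ))) := by
    intro x y u
    rw [Finset.sum_congr rfl (fun i _ => (by ring :
        2*((((x i).val:ℤ)) - (((y i).val:ℤ)) + (((z i).val:ℤ)))*(((u i).val:ℤ))
          = (((x i).val:ℤ) * ((u i).val:ℤ)) * 2 - (((y i).val:ℤ) * ((u i).val:ℤ)) * 2
            + (((u i).val:ℤ) * ((z i).val:ℤ)) * 2)),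
      Finset.sum_add_distrib, Finset.sum_sub_distrib,
      ← Finset.sum_mul, ← Finset.sum_mul, ← Finset.sum_mul]
    ring
  -- product-character lemma
  have hprod : ∀ x y u : Fin n → ZMod q,
      (∏ i, (xiq q ^ ((((x i).val:ℤ)) - (((y i).val:ℤ)) + (((z i).val:ℤ)))) ^ ((u i).val))
        = omg q ^ (∑ i, 2*((((x i).val:ℤ)) - (((y i).val:ℤ)) + (((z i).val:ℤ)))*(((u i).val:ℤ))) := by
    intro x y u
    rw [zpow_sum₀ hW]
    refine Finset.prod_congr rfl fun i _ => ?_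
    rw [xiq_eq, ← zpow_natCast (omg q) 2, ← zpow_mul, ← zpow_natCast (omg q ^ ((((2:ℕ)):ℤ) * ((((x i).val:ℤ)) - (((y i).val:ℤ)) + (((z i).val:ℤ))))) ((u i).val), ← zpow_mul]
    congr 1
    try push_cast
    try ring
  have hchar : ∀ x y : Fin n → ZMod q,
      (∑ u : Fin n → ZMod q,
        ∏ i, (xiq q ^ ((((x i).val:ℤ)) - (((y i).val:ℤ)) + (((z i).val:ℤ)))) ^ ((u i).val))
      = if y = x + z then ((q:ℂ))^n else 0 := by
    intro x y
    rw [← Fintype.prod_sum (κ := fun _ : Fin n => ZMod q)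
        (f := fun i (v : ZMod q) =>
          (xiq q ^ ((((x i).val:ℤ)) - (((y i).val:ℤ)) + (((z i).val:ℤ)))) ^ v.val),
      Finset.prod_congr rfl (fun i _ => sum_char q _), prod_ite_all]
    have hiff : (∀ i, (q:ℤ) ∣ ((((x i).val:ℤ)) - (((y i).val:ℤ)) + (((z i).val:ℤ)))) ↔ y = x + z := by
      constructor
      · intro h
        funext i
        exact (dvd_iff_eq q _ _ _).mp (h i)
      · rintro rfl
        intro i
        exact (dvd_iff_eq q _ _ _).mpr rfl
    rw [if_congr hiff rfl rfl]
  -- per-u expansion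
  have step1 : ∀ u : Fin n → ZMod q,
      omg q ^ (∑ i, (z i).val) *
        (NHT q n f u * (starRingEnd ℂ) (NHT q n g u) * xiq q ^ (∑ i, (u i).val * (z i).val))
      = ∑ x : Fin n → ZMod q, ∑ y : Fin n → ZMod q,
          s^2 * (omg q ^ ((((f x).val:ℤ) + (∑ i, ((x i).val:ℤ)) + ∑ i, ((z i).val:ℤ)))
            * omg q ^ (-((((g y).val:ℤ) + ∑ i, ((y i).val:ℤ))))
            * ∏ i, (xiq q ^ ((((x i).val:ℤ)) - (((y i).val:ℤ)) + (((z i).val:ℤ)))) ^ ((u i).val)) := by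
    intro u
    rw [hNHT f u, hconj u]
    calc omg q ^ (∑ i, (z i).val) *
          ((s * ∑ x : Fin n → ZMod q,
              omg q ^ ((f x).val + 2 * (∑ i, (x i).val * (u i).val) + ∑ i, (x i).val)) *
           (s * ∑ y : Fin n → ZMod q,
              omg q ^ (-(((g y).val + 2 * (∑ i, (y i).val * (u i).val) + ∑ i, (y i).val : ℕ) : ℤ))) *
           xiq q ^ (∑ i, (u i).val * (z i).val))
        = (s^2 * (omg q ^ (∑ i, (z i).val) * xiq q ^ (∑ i, (u i).val * (z i).val))) *
            ((∑ x : Fin n → ZMod q,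
              omg q ^ ((f x).val + 2 * (∑ i, (x i).val * (u i).val) + ∑ i, (x i).val)) *
             (∑ y : Fin n → ZMod q,
              omg q ^ (-(((g y).val + 2 * (∑ i, (y i).val * (u i).val) + ∑ i, (y i).val : ℕ) : ℤ)))) := by
          ring
      _ = (s^2 * (omg q ^ (∑ i, (z i).val) * xiq q ^ (∑ i, (u i).val * (z i).val))) *
            (∑ x : Fin n → ZMod q, ∑ y : Fin n → ZMod q,
              omg q ^ ((f x).val + 2 * (∑ i, (x i).val * (u i).val) + ∑ i, (x i).val) *
              omg q ^ (-(((g y).val + 2 * (∑ i, (y i).val * (u i).val) + ∑ i, (y i).val : ℕ) : ℤ))) := by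
          rw [Finset.sum_mul_sum]
      _ = ∑ x : Fin n → ZMod q, ∑ y : Fin n → ZMod q,
            (s^2 * (omg q ^ (∑ i, (z i).val) * xiq q ^ (∑ i, (u i).val * (z i).val))) *
              (omg q ^ ((f x).val + 2 * (∑ i, (x i).val * (u i).val) + ∑ i, (x i).val) *
               omg q ^ (-(((g y).val + 2 * (∑ i, (y i).val * (u i).val) + ∑ i, (y i).val : ℕ) : ℤ))) := by
          rw [Finset.mul_sum]
          exact Finset.sum_congr rfl fun x _ => by rw [Finset.mul_sum]
      _ = ∑ x : Fin n → ZMod q, ∑ y : Fin n → ZMod q,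
          s^2 * (omg q ^ ((((f x).val:ℤ) + (∑ i, ((x i).val:ℤ)) + ∑ i, ((z i).val:ℤ)))
            * omg q ^ (-((((g y).val:ℤ) + ∑ i, ((y i).val:ℤ))))
            * ∏ i, (xiq q ^ ((((x i).val:ℤ)) - (((y i).val:ℤ)) + (((z i).val:ℤ)))) ^ ((u i).val)) := by
          refine Finset.sum_congr rfl fun x _ => Finset.sum_congr rfl fun y _ => ?_
          rw [hprod x y u, xiq_eq, ← pow_mul]
          calc (s^2 * (omg q ^ (∑ i, (z i).val) * omg q ^ (2 * ∑ i, (u i).val * (z i).val))) *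
                (omg q ^ ((f x).val + 2 * (∑ i, (x i).val * (u i).val) + ∑ i, (x i).val) *
                 omg q ^ (-(((g y).val + 2 * (∑ i, (y i).val * (u i).val) + ∑ i, (y i).val : ℕ) : ℤ)))
              = s^2 * (omg q ^ (∑ i, (z i).val) * omg q ^ (2 * ∑ i, (u i).val * (z i).val) *
                  (omg q ^ ((f x).val + 2 * (∑ i, (x i).val * (u i).val) + ∑ i, (x i).val) *
                   omg q ^ (-(((g y).val + 2 * (∑ i, (y i).val * (u i).val) + ∑ i, (y i).val : ℕ) : ℤ)))) := by
                ring
            _ = s^2 * (omg q ^ ((((f x).val:ℤ) + (∑ i, ((x i).val:ℤ)) + ∑ i, ((z i).val:ℤ)))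
                  * omg q ^ (-((((g y).val:ℤ) + ∑ i, ((y i).val:ℤ))))
                  * omg q ^ (∑ i, 2*((((x i).val:ℤ)) - (((y i).val:ℤ)) + (((z i).val:ℤ)))*(((u i).val:ℤ)))) := by
                congr 1
                simp only [← zpow_natCast (omg q)]
                simp only [← zpow_add₀ hW]
                congr 1
                push_cast
                rw [hsum x y u]
                ring
  rw [hL, Finset.mul_sum,
    Finset.sum_congr rfl (fun u _ => step1 u), Finset.sum_comm]
  refine Finset.sum_congr rfl fun x _ => ?_
  rw [Finset.sum_comm]
  -- collapse the u-sum then the y-sum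
  have hy : ∀ y : Fin n → ZMod q,
      (∑ u : Fin n → ZMod q,
        s^2 * (omg q ^ ((((f x).val:ℤ) + (∑ i, ((x i).val:ℤ)) + ∑ i, ((z i).val:ℤ)))
          * omg q ^ (-((((g y).val:ℤ) + ∑ i, ((y i).val:ℤ))))
          * ∏ i, (xiq q ^ ((((x i).val:ℤ)) - (((y i).val:ℤ)) + (((z i).val:ℤ)))) ^ ((u i).val)))
      = if y = x + z then
          s^2 * (omg q ^ ((((f x).val:ℤ) + (∑ i, ((x i).val:ℤ)) + ∑ i, ((z i).val:ℤ)))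
            * omg q ^ (-((((g y).val:ℤ) + ∑ i, ((y i).val:ℤ)))) * ((q:ℂ))^n)
        else 0 := by
    intro y
    rw [← Finset.mul_sum, ← Finset.mul_sum, hchar x y]
    by_cases hyx : y = x + z
    · rw [if_pos hyx, if_pos hyx]
    · rw [if_neg hyx, if_neg hyx, mul_zero, mul_zero]
  rw [Finset.sum_congr rfl (fun y _ => hy y),
    Finset.sum_ite_eq' Finset.univ (x+z), if_pos (Finset.mem_univ _)]
  symm
  calc s^2 * (omg q ^ ((((f x).val:ℤ) + (∑ i, ((x i).val:ℤ)) + ∑ i, ((z i).val:ℤ)))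
        * omg q ^ (-((((g (x+z)).val:ℤ) + ∑ i, ((((x+z) i)).val:ℤ)))) * ((q:ℂ))^n)
      = (s^2 * ((q:ℂ))^n) * (omg q ^ ((((f x).val:ℤ) + (∑ i, ((x i).val:ℤ)) + ∑ i, ((z i).val:ℤ)))
          * omg q ^ (-((((g (x+z)).val:ℤ) + ∑ i, ((((x+z) i)).val:ℤ))))) := by
        ring
    _ = omg q ^ ((((f x).val:ℤ) + (∑ i, ((x i).val:ℤ)) + ∑ i, ((z i).val:ℤ)))
          * omg q ^ (-((((g (x+z)).val:ℤ) + ∑ i, ((((x+z) i)).val:ℤ)))) := by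
        rw [hs2, one_mul]
    _ = omg q ^ (((((f x).val:ℤ) + (∑ i, ((x i).val:ℤ)) + ∑ i, ((z i).val:ℤ)))
          + -((((g (x+z)).val:ℤ) + ∑ i, ((((x+z) i)).val:ℤ)))) := (zpow_add₀ hW _ _).symm
    _ = omg q ^ (((((f x).val:ℤ)) - (((g (x+z)).val:ℤ)))
          + (q:ℤ) * (((Finset.univ.filter (fun i => q ≤ (x i).val + (z i).val)).card : ℕ) : ℤ)) := by
        congr 1
        have hc := carry_sum q x z
        simp only [Pi.add_apply]
        linarith [hc]
    _ = omg q ^ ((((f x).val:ℤ)) - (((g (x+z)).val:ℤ))) *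
          (-1:ℂ) ^ (Finset.univ.filter (fun i => q ≤ (x i).val + (z i).val)).card := by
        rw [zpow_add₀ hW, zpow_mul, zpow_natCast (omg q) q, omg_pow_q, zpow_natCast]
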